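/- Let n ≥ 1. There exists a constant C > 0, depending only on n, with the following property: if R > 0 and h : S^{2n−1} × ℂ → ℂ is a bounded measurable function satisfying h(w,s) = 0 whenever |s| ≥ R, then for every z ∈ ℂⁿ with z ≠ 0 one has |(R*h)(z)| ≤ C·(sup |h|)·max(1, R²/‖z‖²); in particular (R*h)(z) → 0 as ‖z‖ → ∞. -/

import Mathlib

open MeasureTheory Metric

noncomputable instance {n : ℕ} : MeasurableSpace (EuclideanSpace ℂ (Fin n)) := borel _
instance {n : ℕ} : BorelSpace (EuclideanSpace ℂ (Fin n)) := ⟨rfl⟩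

/-- The bilinear pairing `⟨z,w⟩ = ∑ⱼ zⱼ wⱼ` on `ℂⁿ`. -/
noncomputable def pairC {n : ℕ} (z w : EuclideanSpace ℂ (Fin n)) : ℂ := ∑ j, z j * w j

/-- The complex Radon transform: the integral of `f` over the affine hyperplane
`{z | ⟨z,w⟩ = s}` with respect to its area measure, i.e. the `(2n-2)`-dimensional
Hausdorff measure of the ambient Euclidean space restricted to the hyperplane. -/
noncomputable def radonC {n : ℕ} (f : EuclideanSpace ℂ (Fin n) → ℂ)
    (w : EuclideanSpace ℂ (Fin n)) (s : ℂ) : ℂ :=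
  ∫ z in {z | pairC z w = s}, f z ∂(μH[(2 * n - 2 : ℝ)])

/-- The dual Radon transform `(R*g)(z) = ∫_{S^{2n-1}} g(w, ⟨z,w⟩) dσ(w)`, where `σ` is
the surface measure (`(2n-1)`-dimensional Hausdorff measure) on the unit sphere. -/
noncomputable def dualRadonC {n : ℕ} (g : EuclideanSpace ℂ (Fin n) → ℂ → ℂ)
    (z : EuclideanSpace ℂ (Fin n)) : ℂ :=
  ∫ w in sphere (0 : EuclideanSpace ℂ (Fin n)) 1, g w (pairC z w) ∂(μH[(2 * n - 1 : ℝ)])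


open Module Bornology

local notation "⟪" x ", " y "⟫_ℝ" => @inner ℝ _ _ x y
local notation "⟪" x ", " y "⟫_ℂ" => @inner ℂ _ _ x y

lemma aux_bounded_submodule {E : Type*} [NormedAddCommGroup E] [NormedSpace ℝ E]
    [FiniteDimensional ℝ E] [MeasurableSpace E] [BorelSpace E]
    (K : Submodule ℝ E) {s : Set E} (hsK : s ⊆ (K : Set E)) (hs : IsBounded s) :
    μH[(finrank ℝ K : ℝ)] s < ⊤ := by
  have hiso : Isometry ((↑) : K → E) := isometry_subtype_coe
  have himg : ((↑) : K → E) '' (((↑) : K → E) ⁻¹' s) = s := by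
    rw [Set.image_preimage_eq_inter_range, Subtype.range_coe]
    exact Set.inter_eq_left.2 hsK
  rw [← himg, hiso.hausdorffMeasure_image (Or.inl (by positivity))]
  obtain ⟨r, hr⟩ := (hs.subset_closedBall (0 : E))
  have hsub : ((↑) : K → E) ⁻¹' s ⊆ closedBall (0 : K) r := by
    intro x hx
    have := hr hx
    simpa [mem_closedBall, dist_eq_norm] using this
  refine lt_of_le_of_lt (measure_mono hsub) ?_
  exact (isCompact_closedBall _ _).measure_lt_top

lemma aux_bounded_affine {E : Type*} [NormedAddCommGroup E] [NormedSpace ℝ E]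
    [FiniteDimensional ℝ E] [MeasurableSpace E] [BorelSpace E]
    (K : Submodule ℝ E) (x₀ : E) {s : Set E} (hsK : ∀ x ∈ s, x - x₀ ∈ K)
    (hs : IsBounded s) : μH[(finrank ℝ K : ℝ)] s < ⊤ := by
  have hiso : Isometry (fun y : E => x₀ + y) := Isometry.of_dist_eq (by
    intro a b; simp [dist_eq_norm])
  have himg : (fun y : E => x₀ + y) '' ((fun y : E => y - x₀) '' s) = s := by
    ext x
    simp only [Set.image_image, Set.mem_image]
    constructor
    · rintro ⟨y, hy, rfl⟩; simpa using hy
    · intro hx; exact ⟨x, hx, by abel⟩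
  rw [← himg, hiso.hausdorffMeasure_image (Or.inl (by positivity))]
  refine aux_bounded_submodule K ?_ ?_
  · rintro x ⟨y, hy, rfl⟩; exact hsK y hy
  · have hiso2 : Isometry (fun y : E => y - x₀) := Isometry.of_dist_eq (by
      intro a b; simp [dist_eq_norm, sub_sub_sub_cancel_right])
    exact hiso2.lipschitz.isBounded_image hs

lemma aux_radial_lipschitz {E : Type*} [NormedAddCommGroup E] [NormedSpace ℝ E] :
    LipschitzOnWith 2 (fun x : E => ‖x‖⁻¹ • x) {x : E | 1 ≤ ‖x‖} := by
  refine LipschitzOnWith.of_dist_le_mul ?_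
  intro x hx y hy
  simp only [Set.mem_setOf_eq] at hx hy
  have hx0 : (0:ℝ) < ‖x‖ := lt_of_lt_of_le one_pos hx
  have hy0 : (0:ℝ) < ‖y‖ := lt_of_lt_of_le one_pos hy
  have key : ‖x‖⁻¹ • x - ‖y‖⁻¹ • y = ‖x‖⁻¹ • (x - y) + (‖x‖⁻¹ - ‖y‖⁻¹) • y := by
    rw [smul_sub, sub_smul]; abel
  rw [dist_eq_norm, key]
  have h1 : ‖(‖x‖⁻¹ - ‖y‖⁻¹) • y‖ ≤ ‖x‖⁻¹ * ‖x - y‖ := by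
    have e1 : ‖(‖x‖⁻¹ - ‖y‖⁻¹) • y‖ = |‖y‖ - ‖x‖| / (‖x‖ * ‖y‖) * ‖y‖ := by
      rw [norm_smul, Real.norm_eq_abs, inv_sub_inv (ne_of_gt hx0) (ne_of_gt hy0),
        abs_div, abs_mul, abs_of_pos hx0, abs_of_pos hy0]
    have e2 : |‖y‖ - ‖x‖| / (‖x‖ * ‖y‖) * ‖y‖ = |‖y‖ - ‖x‖| / ‖x‖ := by
      field_simp
    have h3 : |‖y‖ - ‖x‖| ≤ ‖x - y‖ := by
      have := abs_norm_sub_norm_le y x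
      rwa [norm_sub_rev y x] at this
    rw [e1, e2, div_eq_inv_mul]
    exact mul_le_mul_of_nonneg_left h3 (le_of_lt (inv_pos.2 hx0))
  have hinv : ‖x‖⁻¹ ≤ 1 := by
    rw [inv_le_one_iff₀]; right; exact hx
  calc ‖‖x‖⁻¹ • (x - y) + (‖x‖⁻¹ - ‖y‖⁻¹) • y‖
      ≤ ‖‖x‖⁻¹ • (x - y)‖ + ‖(‖x‖⁻¹ - ‖y‖⁻¹) • y‖ := norm_add_le _ _
    _ ≤ ‖x‖⁻¹ * ‖x - y‖ + ‖x‖⁻¹ * ‖x - y‖ := by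
        refine add_le_add ?_ h1
        rw [norm_smul, Real.norm_eq_abs, abs_of_pos (inv_pos.2 hx0)]
    _ ≤ 2 * dist x y := by
        rw [dist_eq_norm]
        have h2 : ‖x‖⁻¹ * ‖x - y‖ ≤ 1 * ‖x - y‖ :=
          mul_le_mul_of_nonneg_right hinv (norm_nonneg _)
        push_cast
        nlinarith [norm_nonneg (x - y)]

lemma aux_sphere_finite {E : Type*} [NormedAddCommGroup E] [InnerProductSpace ℝ E]
    [FiniteDimensional ℝ E] [MeasurableSpace E] [BorelSpace E] (hm : 1 ≤ finrank ℝ E) :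
    μH[((finrank ℝ E : ℝ) - 1)] (sphere (0:E) 1) < ⊤ := by
  set m := finrank ℝ E with hmdef
  set d : ℝ := (m : ℝ) - 1 with hd
  have hd0 : 0 ≤ d := by
    rw [hd]; simp only [sub_nonneg]; exact_mod_cast hm
  set p : E → E := fun x => ‖x‖⁻¹ • x with hp
  set b := stdOrthonormalBasis ℝ E with hb
  set u : Fin m → Bool → E := fun j s => (if s then (1:ℝ) else -1) • b j with hu
  have hunorm : ∀ j s, ‖u j s‖ = 1 := by
    intro j s
    rw [hu]; cases s <;> simp [norm_smul, b.orthonormal.1 j]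
  set T : Fin m → Bool → Set E :=
    fun j s => {x : E | x - u j s ∈ LinearMap.ker (innerSL ℝ (u j s) : E →ₗ[ℝ] ℝ)} ∩ closedBall 0 (m+1)
    with hT
  -- each T j s lies in the Lipschitz domain
  have hTD : ∀ j s, T j s ⊆ {x : E | 1 ≤ ‖x‖} := by
    intro j s x hx
    obtain ⟨hker, -⟩ := hx
    simp only [LinearMap.mem_ker, ContinuousLinearMap.coe_coe, Set.mem_setOf_eq] at hker ⊢
    rw [innerSL_apply_apply] at hker
    have hdecomp : x = u j s + (x - u j s) := by abel
    have : ‖x‖ ^ 2 = ‖u j s‖ ^ 2 + ‖x - u j s‖ ^ 2 := by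
      conv_lhs => rw [hdecomp]
      rw [norm_add_sq_real, hker]
      ring
    nlinarith [norm_nonneg x, norm_nonneg (x - u j s), hunorm j s]
  -- the covering
  have hcov : sphere (0:E) 1 ⊆ ⋃ j : Fin m, ⋃ s : Bool, p '' T j s := by
    intro w hw
    have hwn : ‖w‖ = 1 := by simpa using hw
    have hsum : (∑ j : Fin m, ⟪b j, w⟫_ℝ ^ 2) = 1 := by
      have h1 : ‖b.repr w‖ = 1 := by rw [b.repr.norm_map, hwn]
      have h2 : Real.sqrt (∑ j : Fin m, ‖b.repr w j‖ ^ 2) = 1 := by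
        rw [← EuclideanSpace.norm_eq]; exact h1
      have h3 : (∑ j : Fin m, ‖b.repr w j‖ ^ 2) = 1 := by
        have hnn : (0:ℝ) ≤ ∑ j : Fin m, ‖b.repr w j‖ ^ 2 :=
          Finset.sum_nonneg fun j _ => sq_nonneg _
        nlinarith [Real.sq_sqrt hnn]
      simpa [b.repr_apply_apply, Real.norm_eq_abs, sq_abs] using h3
    have hex : ∃ j : Fin m, 1 / (m:ℝ) ≤ ⟪b j, w⟫_ℝ ^ 2 := by
      by_contra hcon
      push_neg at hcon
      have hlt : ∑ j : Fin m, ⟪b j, w⟫_ℝ ^ 2 < ∑ _j : Fin m, 1/(m:ℝ) :=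
        Finset.sum_lt_sum_of_nonempty (by simp [Finset.univ_nonempty_iff, Fin.pos_iff_nonempty.mp hm]) (fun j _ => hcon j)
      rw [hsum] at hlt
      have hm0 : (0:ℝ) < m := by exact_mod_cast hm
      simp only [Finset.sum_const, Finset.card_univ, Fintype.card_fin, nsmul_eq_mul] at hlt
      rw [mul_one_div, div_self (ne_of_gt hm0)] at hlt
      exact lt_irrefl _ hlt
    obtain ⟨j, hj⟩ := hex
    set c0 := ⟪b j, w⟫_ℝ with hc0
    set s : Bool := decide (0 ≤ c0) with hs
    have hus : u j s = (if 0 ≤ c0 then (1:ℝ) else -1) • b j := by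
      rw [hu]; by_cases h : 0 ≤ c0 <;> simp [hs, h]
    set c := |c0| with hc
    have hm0 : (0:ℝ) < m := by exact_mod_cast hm
    have hc0sq : 1/(m:ℝ) ≤ c^2 := by rw [hc, sq_abs]; exact hj
    have hcpos : 0 < c := by
      rw [hc, abs_pos]
      intro h0
      rw [h0] at hj; simp at hj
      nlinarith
    have hinner : ⟪u j s, w⟫_ℝ = c := by
      rw [hus]
      by_cases h : 0 ≤ c0
      · simp [h, real_inner_smul_left, hc, ← hc0, abs_of_nonneg h]
      · simp [h, real_inner_smul_left, hc, ← hc0, abs_of_neg (lt_of_not_ge h)]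
    have hcle1 : c ≤ 1 := by
      have := abs_real_inner_le_norm (b j) w
      rw [b.orthonormal.1 j, hwn] at this
      simpa [hc, hc0] using this
    have hcinvm : c⁻¹ ≤ m := by
      have h1 : 1 ≤ (m:ℝ) * c := by
        nlinarith [(div_le_iff₀ hm0).mp hc0sq,
          mul_nonneg (mul_nonneg (le_of_lt hm0) (le_of_lt hcpos)) (sub_nonneg.mpr hcle1)]
      have := (div_le_iff₀ hcpos).mpr h1
      simpa [one_div] using this
    refine Set.mem_iUnion.2 ⟨j, Set.mem_iUnion.2 ⟨s, ?_⟩⟩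
    refine ⟨c⁻¹ • w, ⟨?_, ?_⟩, ?_⟩
    · simp only [LinearMap.mem_ker, ContinuousLinearMap.coe_coe, Set.mem_setOf_eq, innerSL_apply_apply]
      rw [inner_sub_right, real_inner_smul_right, hinner,
        real_inner_self_eq_norm_sq, hunorm j s]
      field_simp; ring
    · simp only [mem_closedBall, dist_zero_right, norm_smul, Real.norm_eq_abs,
        abs_of_pos (inv_pos.2 hcpos), hwn, mul_one]
      linarith
    · have hn : ‖c⁻¹ • w‖ = c⁻¹ := by
        rw [norm_smul, Real.norm_eq_abs, abs_of_pos (inv_pos.2 hcpos), hwn, mul_one]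
      show ‖c⁻¹ • w‖⁻¹ • (c⁻¹ • w) = w
      rw [hn, inv_inv, smul_smul, mul_inv_cancel₀ (ne_of_gt hcpos), one_smul]
  -- measure estimate
  calc μH[d] (sphere (0:E) 1) ≤ μH[d] (⋃ j : Fin m, ⋃ s : Bool, p '' T j s) :=
        measure_mono hcov
    _ ≤ ∑' j : Fin m, μH[d] (⋃ s : Bool, p '' T j s) := measure_iUnion_le _
    _ ≤ ∑' j : Fin m, ∑' s : Bool, μH[d] (p '' T j s) :=
        ENNReal.tsum_le_tsum fun j => measure_iUnion_le _
    _ < ⊤ := by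
        rw [tsum_fintype]
        refine ENNReal.sum_lt_top.mpr fun j _ => ?_
        rw [tsum_fintype]
        refine ENNReal.sum_lt_top.mpr fun s _ => ?_
        have hlip : LipschitzOnWith 2 p (T j s) :=
          (aux_radial_lipschitz (E := E)).mono (hTD j s)
        refine lt_of_le_of_lt (hlip.hausdorffMeasure_image_le hd0) ?_
        refine ENNReal.mul_lt_top ?_ ?_
        · exact ENNReal.rpow_lt_top_of_nonneg hd0 (by simp)
        · have hker : μH[(finrank ℝ (LinearMap.ker (innerSL ℝ (u j s) : E →ₗ[ℝ] ℝ)) : ℝ)] (T j s) < ⊤ := by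
            refine aux_bounded_affine _ (u j s) (fun x hx => hx.1) ?_
            exact (isBounded_closedBall).subset (Set.inter_subset_right)
          have hfr : (finrank ℝ (LinearMap.ker (innerSL ℝ (u j s) : E →ₗ[ℝ] ℝ)) : ℝ) = d := by
            have hne : (innerSL ℝ (u j s)) ≠ 0 := by
              intro h0
              have := congrArg (fun f => (f : E →L[ℝ] ℝ) (u j s)) h0
              simp only [innerSL_apply_apply, ContinuousLinearMap.zero_apply] at this
              rw [real_inner_self_eq_norm_sq, hunorm j s] at this
              norm_num at this
            have hne' : ((innerSL ℝ (u j s)).toLinearMap : Module.Dual ℝ E) ≠ 0 := by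
              intro h0
              apply hne
              ext x
              have := congrArg (fun g : Module.Dual ℝ E => g x) h0
              simpa using this
            have h4 := Module.Dual.finrank_ker_add_one_of_ne_zero hne'
            have h5 : finrank ℝ (LinearMap.ker (innerSL ℝ (u j s) : E →ₗ[ℝ] ℝ)) + 1 = m := h4
            rw [hd]
            have h6 := congrArg (fun k : ℕ => (k:ℝ)) h5
            push_cast at h6
            linarith
          rwa [hfr] at hker

lemma fn_finrank (n : ℕ) : finrank ℝ (EuclideanSpace ℂ (Fin n)) = 2 * n := by
  have h := Module.finrank_mul_finrank ℝ ℂ (EuclideanSpace ℂ (Fin n))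
  rw [Complex.finrank_real_complex, finrank_euclideanSpace_fin] at h
  omega

lemma fn_sphere_lt_top (n : ℕ) (hn : 1 ≤ n) :
    μH[(2 * n - 1 : ℝ)] (sphere (0 : EuclideanSpace ℂ (Fin n)) 1) < ⊤ := by
  letI : InnerProductSpace ℝ (EuclideanSpace ℂ (Fin n)) := InnerProductSpace.complexToReal
  have h := aux_sphere_finite (E := EuclideanSpace ℂ (Fin n))
    (by rw [fn_finrank]; omega)
  have he : ((finrank ℝ (EuclideanSpace ℂ (Fin n)) : ℝ) - 1) = (2 * n - 1 : ℝ) := by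
    rw [fn_finrank]; push_cast; ring
  rwa [he] at h

lemma fn_slab_null (n : ℕ) (hn : 1 ≤ n) (v : EuclideanSpace ℂ (Fin n)) (hv : ‖v‖ = 1) :
    μH[(2 * n - 1 : ℝ)]
      (sphere (0 : EuclideanSpace ℂ (Fin n)) 1 ∩ {w | ⟪v, w⟫_ℂ = 0}) = 0 := by
  set K : Submodule ℂ (EuclideanSpace ℂ (Fin n)) := LinearMap.ker (innerSL ℂ v : EuclideanSpace ℂ (Fin n) →ₗ[ℂ] ℂ) with hK
  have hne' : ((innerSL ℂ v).toLinearMap : Module.Dual ℂ (EuclideanSpace ℂ (Fin n))) ≠ 0 := by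
    intro h0
    have := congrArg (fun g : Module.Dual ℂ (EuclideanSpace ℂ (Fin n)) => g v) h0
    simp only [ContinuousLinearMap.coe_coe, LinearMap.zero_apply, innerSL_apply_apply] at this
    rw [inner_self_eq_norm_sq_to_K, hv] at this
    norm_num at this
  have hkC : finrank ℂ K + 1 = n := by
    have := Module.Dual.finrank_ker_add_one_of_ne_zero hne'
    rwa [finrank_euclideanSpace_fin] at this
  have hkR : finrank ℝ (K.restrictScalars ℝ) = 2 * (n - 1) := by
    have h1 : finrank ℝ (K.restrictScalars ℝ) = finrank ℝ K :=
      ((Submodule.restrictScalarsEquiv (S := ℝ) (p := K)).restrictScalars ℝ).finrank_eq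
    have h2 := Module.finrank_mul_finrank ℝ ℂ K
    rw [Complex.finrank_real_complex] at h2
    omega
  have hsub : sphere (0 : EuclideanSpace ℂ (Fin n)) 1 ∩ {w | ⟪v, w⟫_ℂ = 0} ⊆ (K.restrictScalars ℝ : Set (EuclideanSpace ℂ (Fin n))) := by
    rintro w ⟨-, hw⟩
    simp only [Submodule.coe_restrictScalars, SetLike.mem_coe, hK, LinearMap.mem_ker,
      ContinuousLinearMap.coe_coe, innerSL_apply_apply]
    exact hw
  have hbdd : IsBounded (sphere (0 : EuclideanSpace ℂ (Fin n)) 1 ∩ {w | ⟪v, w⟫_ℂ = 0}) :=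
    (isBounded_sphere).subset Set.inter_subset_left
  have hfin := aux_bounded_submodule (K.restrictScalars ℝ) hsub hbdd
  have hcast : (finrank ℝ (K.restrictScalars ℝ) : ℝ) = 2 * n - 2 := by
    rw [hkR]
    have : (n:ℝ) ≥ 1 := by exact_mod_cast hn
    push_cast [Nat.cast_sub hn]
    ring
  rw [hcast] at hfin
  rcases Measure.hausdorffMeasure_zero_or_top (show (2*(n:ℝ)-2) < 2*n-1 by linarith)
    (sphere (0 : EuclideanSpace ℂ (Fin n)) 1 ∩ {w | ⟪v, w⟫_ℂ = 0}) with h | h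
  · exact h
  · exact absurd h (by simpa using hfin.ne)

/-- An orthonormal basis whose first vector is a prescribed unit vector. -/
lemma fn_exists_basis (n : ℕ) (hn : 1 ≤ n) (v : EuclideanSpace ℂ (Fin n)) (hv : ‖v‖ = 1) :
    ∃ b : OrthonormalBasis (Fin n) ℂ (EuclideanSpace ℂ (Fin n)), b ⟨0, hn⟩ = v := by
  have hcard : finrank ℂ (EuclideanSpace ℂ (Fin n)) = Fintype.card (Fin n) := by
    simp [finrank_euclideanSpace_fin]
  have horto : Orthonormal ℂ (({⟨0, hn⟩} : Set (Fin n)).restrict (fun _ : Fin n => v)) := by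
    constructor
    · intro i; exact hv
    · intro i j hij
      haveI : Unique (({⟨0, hn⟩} : Set (Fin n)) : Type) := Set.uniqueSingleton _
      exact (hij (Subsingleton.elim i j)).elim
  obtain ⟨b, hb⟩ := horto.exists_orthonormalBasis_extension_of_card_eq hcard
  exact ⟨b, hb _ rfl⟩

lemma fn_slab_eq (n : ℕ) (hn : 1 ≤ n) (v : EuclideanSpace ℂ (Fin n)) (hv : ‖v‖ = 1) (t : ℝ) :
    μH[(2 * n - 1 : ℝ)]
      (sphere (0 : EuclideanSpace ℂ (Fin n)) 1 ∩ {w | ‖⟪v, w⟫_ℂ‖ ≤ t}) =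
    μH[(2 * n - 1 : ℝ)]
      (sphere (0 : EuclideanSpace ℂ (Fin n)) 1 ∩
        {w | ‖⟪EuclideanSpace.single (⟨0, hn⟩ : Fin n) (1:ℂ), w⟫_ℂ‖ ≤ t}) := by
  set v₀ : EuclideanSpace ℂ (Fin n) := EuclideanSpace.single (⟨0, hn⟩ : Fin n) (1:ℂ) with hv₀
  have hv₀n : ‖v₀‖ = 1 := by simp [hv₀, EuclideanSpace.norm_single]
  obtain ⟨b, hb⟩ := fn_exists_basis n hn v hv
  obtain ⟨b₀, hb₀⟩ := fn_exists_basis n hn v₀ hv₀n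
  set U : EuclideanSpace ℂ (Fin n) ≃ₗᵢ[ℂ] EuclideanSpace ℂ (Fin n) :=
    b₀.repr.trans b.repr.symm with hU
  have hUv₀ : U v₀ = v := by
    rw [hU]
    simp only [LinearIsometryEquiv.trans_apply]
    rw [← hb₀, b₀.repr_self, ← hb]
    rw [← b.repr_self ⟨0, hn⟩]
    exact b.repr.symm_apply_apply _
  have himg : U '' (sphere (0 : EuclideanSpace ℂ (Fin n)) 1 ∩ {w | ‖⟪v₀, w⟫_ℂ‖ ≤ t})
      = sphere (0 : EuclideanSpace ℂ (Fin n)) 1 ∩ {w | ‖⟪v, w⟫_ℂ‖ ≤ t} := by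
    ext x
    constructor
    · rintro ⟨w, ⟨hw1, hw2⟩, rfl⟩
      refine ⟨?_, ?_⟩
      · simp only [mem_sphere_iff_norm, sub_zero] at hw1 ⊢
        rw [U.norm_map]; exact hw1
      · simp only [Set.mem_setOf_eq] at hw2 ⊢
        rw [← hUv₀, U.inner_map_map]
        exact hw2
    · rintro ⟨hx1, hx2⟩
      refine ⟨U.symm x, ⟨?_, ?_⟩, U.apply_symm_apply x⟩
      · simp only [mem_sphere_iff_norm, sub_zero] at hx1 ⊢
        rw [U.symm.norm_map]; exact hx1
      · simp only [Set.mem_setOf_eq] at hx2 ⊢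
        have : ⟪v₀, U.symm x⟫_ℂ = ⟪U v₀, x⟫_ℂ := by
          conv_rhs => rw [← U.apply_symm_apply x]
          rw [U.inner_map_map]
        rw [this, hUv₀]
        exact hx2
  rw [← himg]
  exact U.isometry.hausdorffMeasure_image (Or.inr U.surjective) _

/-- The coordinatewise conjugate, as an element of Euclidean space. -/
noncomputable def conjE {n : ℕ} (z : EuclideanSpace ℂ (Fin n)) : EuclideanSpace ℂ (Fin n) :=
  (WithLp.equiv 2 (Fin n → ℂ)).symm fun j => starRingEnd ℂ (z j)

lemma conjE_apply {n : ℕ} (z : EuclideanSpace ℂ (Fin n)) (j : Fin n) :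
    conjE z j = starRingEnd ℂ (z j) := rfl

lemma conjE_norm {n : ℕ} (z : EuclideanSpace ℂ (Fin n)) : ‖conjE z‖ = ‖z‖ := by
  rw [EuclideanSpace.norm_eq, EuclideanSpace.norm_eq]
  congr 1
  refine Finset.sum_congr rfl fun j _ => ?_
  rw [conjE_apply]
  simp

lemma conjE_inner {n : ℕ} (z w : EuclideanSpace ℂ (Fin n)) :
    ⟪conjE z, w⟫_ℂ = pairC z w := by
  rw [PiLp.inner_apply, pairC]
  refine Finset.sum_congr rfl fun j _ => ?_
  rw [conjE_apply]
  simp [RCLike.inner_apply, mul_comm]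


/-- There is a constant `C = C(n) > 0` such that if `h : S^{2n-1} × ℂ → ℂ` is bounded,
measurable and vanishes for `|s| ≥ R`, then `|(R*h)(z)| ≤ C · sup|h| · max(1, R²/‖z‖²)`
for all `z ≠ 0`; in particular `(R*h)(z) → 0` as `‖z‖ → ∞`. -/
theorem dualRadon_bound (n : ℕ) (hn : 1 ≤ n) :
    ∃ C : ℝ, 0 < C ∧ ∀ R : ℝ, 0 < R → ∀ h : EuclideanSpace ℂ (Fin n) → ℂ → ℂ,
      Measurable (fun p : EuclideanSpace ℂ (Fin n) × ℂ => h p.1 p.2) →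
      ∀ M : ℝ, (∀ w s, ‖h w s‖ ≤ M) →
      (∀ (w : EuclideanSpace ℂ (Fin n)) (s : ℂ), R ≤ ‖s‖ → h w s = 0) →
      (∀ z : EuclideanSpace ℂ (Fin n), z ≠ 0 →
        ‖dualRadonC h z‖ ≤ C * M * max 1 (R ^ 2 / ‖z‖ ^ 2)) ∧
      Filter.Tendsto (dualRadonC h)
        (Filter.comap (fun z : EuclideanSpace ℂ (Fin n) => ‖z‖) Filter.atTop) (nhds 0) := by
  classical
  set μ : Measure (EuclideanSpace ℂ (Fin n)) := μH[(2 * n - 1 : ℝ)] with hμ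
  set S : Set (EuclideanSpace ℂ (Fin n)) := sphere 0 1 with hS
  have hSfin : μ S < ⊤ := fn_sphere_lt_top n hn
  refine ⟨(μ S).toReal + 1, by positivity, ?_⟩
  intro R hR h _hmeas M hM hvan
  have hM0 : 0 ≤ M := le_trans (norm_nonneg _) (hM 0 0)
  have htR : (0:ℝ) ≤ (μ S).toReal := ENNReal.toReal_nonneg
  -- a pointwise bound via slabs
  have key : ∀ z : EuclideanSpace ℂ (Fin n), 1 ≤ ‖z‖ →
      ‖dualRadonC h z‖ ≤ M * (μ (S ∩
        {w | ‖⟪EuclideanSpace.single (⟨0, hn⟩ : Fin n) (1:ℂ), w⟫_ℂ‖ ≤ R / ‖z‖})).toReal := by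
    intro z hz1
    have hz0 : (0:ℝ) < ‖z‖ := lt_of_lt_of_le one_pos hz1
    set v : EuclideanSpace ℂ (Fin n) := ((‖z‖⁻¹ : ℝ) : ℂ) • conjE z with hv
    have hvn : ‖v‖ = 1 := by
      rw [hv, norm_smul, conjE_norm]
      simp [abs_of_pos (inv_pos.2 hz0), inv_mul_cancel₀ (ne_of_gt hz0)]
    have habs : ∀ w, ‖⟪v, w⟫_ℂ‖ = ‖z‖⁻¹ * ‖(pairC z w)‖ := by
      intro w
      rw [hv, inner_smul_left, ← conjE_inner z w]
      simp [Complex.norm_real, abs_of_pos (inv_pos.2 hz0)]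
    set slab : Set (EuclideanSpace ℂ (Fin n)) :=
      {w | ‖⟪v, w⟫_ℂ‖ ≤ R / ‖z‖} with hslab
    have hslabm : MeasurableSet slab := by
      have hc : Continuous fun w : EuclideanSpace ℂ (Fin n) => ‖⟪v, w⟫_ℂ‖ :=
        continuous_norm.comp (Continuous.inner continuous_const continuous_id)
      exact (isClosed_le hc continuous_const).measurableSet
    have hpt : ∀ w, ‖h w (pairC z w)‖ ≤ slab.indicator (fun _ => M) w := by
      intro w
      by_cases hw : w ∈ slab
      · rw [Set.indicator_of_mem hw]; exact hM _ _
      · rw [Set.indicator_of_notMem hw]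
        have hgt : R / ‖z‖ < ‖⟪v, w⟫_ℂ‖ := lt_of_not_ge hw
        rw [habs w] at hgt
        have hRle : R ≤ ‖(pairC z w)‖ := by
          rw [div_lt_iff₀ hz0] at hgt
          have heq : ‖z‖⁻¹ * ‖(pairC z w)‖ * ‖z‖ = ‖(pairC z w)‖ := by
            field_simp
          rw [heq] at hgt
          exact hgt.le
        rw [hvan w _ hRle, norm_zero]
    have hind : Integrable (fun w => slab.indicator (fun _ => M) w) (μ.restrict S) := by
      rw [integrable_indicator_iff hslabm]
      refine integrableOn_const (ne_of_lt ?_)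
      rw [Measure.restrict_apply hslabm]
      exact lt_of_le_of_lt (measure_mono Set.inter_subset_right) hSfin
    calc ‖dualRadonC h z‖ ≤ ∫ w in S, ‖h w (pairC z w)‖ ∂μ :=
          norm_integral_le_integral_norm _
      _ ≤ ∫ w in S, slab.indicator (fun _ => M) w ∂μ := by
          refine integral_mono_of_nonneg (Filter.Eventually.of_forall fun w => norm_nonneg _)
            hind (Filter.Eventually.of_forall hpt)
      _ = ((μ.restrict S) slab).toReal • M := integral_indicator_const M hslabm
      _ = M * (μ (S ∩ slab)).toReal := by
          rw [Measure.restrict_apply hslabm, Set.inter_comm, smul_eq_mul, mul_comm]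
      _ = M * (μ (S ∩ {w | ‖⟪EuclideanSpace.single (⟨0, hn⟩ : Fin n) (1:ℂ), w⟫_ℂ‖
            ≤ R / ‖z‖})).toReal := by
          rw [hslab, fn_slab_eq n hn v hvn (R / ‖z‖)]
  constructor
  · -- the quantitative bound
    intro z hz
    have hb : ‖dualRadonC h z‖ ≤ M * (μ S).toReal := by
      calc ‖dualRadonC h z‖ ≤ ∫ w in S, ‖h w (pairC z w)‖ ∂μ :=
            norm_integral_le_integral_norm _
        _ ≤ ∫ _w in S, M ∂μ := by
            refine integral_mono_of_nonneg (Filter.Eventually.of_forall fun w => norm_nonneg _)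
              (integrableOn_const hSfin.ne)
              (Filter.Eventually.of_forall fun w => hM _ _)
        _ = (μ S).toReal • M := by rw [setIntegral_const]; rfl
        _ = M * (μ S).toReal := by rw [smul_eq_mul, mul_comm]
    have hmax : (1:ℝ) ≤ max 1 (R ^ 2 / ‖z‖ ^ 2) := le_max_left _ _
    nlinarith [mul_nonneg (mul_nonneg (by positivity : (0:ℝ) ≤ (μ S).toReal + 1) hM0)
      (sub_nonneg.mpr hmax)]
  · -- the limit
    set v₀ : EuclideanSpace ℂ (Fin n) := EuclideanSpace.single (⟨0, hn⟩ : Fin n) (1:ℂ) with hv₀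
    have hv₀n : ‖v₀‖ = 1 := by simp [hv₀, EuclideanSpace.norm_single]
    set A : ℕ → Set (EuclideanSpace ℂ (Fin n)) :=
      fun k => S ∩ {w | ‖⟪v₀, w⟫_ℂ‖ ≤ 1 / (k + 1)} with hA
    have hAm : ∀ k, MeasurableSet (A k) := by
      intro k
      have hc : Continuous fun w : EuclideanSpace ℂ (Fin n) => ‖⟪v₀, w⟫_ℂ‖ :=
        continuous_norm.comp (Continuous.inner continuous_const continuous_id)
      exact (isClosed_sphere.inter (isClosed_le hc continuous_const)).measurableSet
    have hAanti : Antitone A := by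
      intro k l hkl
      refine Set.inter_subset_inter_right _ fun w hw => ?_
      simp only [Set.mem_setOf_eq] at hw ⊢
      refine le_trans hw ?_
      have : (k:ℝ) + 1 ≤ (l:ℝ) + 1 := by exact_mod_cast Nat.succ_le_succ hkl
      exact one_div_le_one_div_of_le (by positivity) this
    have hAinter : ⋂ k, A k = S ∩ {w | ⟪v₀, w⟫_ℂ = 0} := by
      ext w
      simp only [Set.mem_iInter, Set.mem_inter_iff, Set.mem_setOf_eq]
      constructor
      · intro hw
        refine ⟨(hw 0).1, ?_⟩
        have habs : ‖⟪v₀, w⟫_ℂ‖ ≤ 0 := by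
          by_contra hcon
          push_neg at hcon
          obtain ⟨k, hk⟩ := exists_nat_one_div_lt hcon
          exact absurd (hw k).2 (not_le.mpr hk)
        have := le_antisymm habs (norm_nonneg _)
        exact norm_eq_zero.mp this
      · rintro ⟨hw1, hw2⟩ k
        refine ⟨hw1, ?_⟩
        simp only [Set.mem_setOf_eq, hw2]
        simp only [norm_zero]
        positivity
    have htendA : Filter.Tendsto (fun k => μ (A k)) Filter.atTop (nhds 0) := by
      have h0 : μ (S ∩ {w | ⟪v₀, w⟫_ℂ = 0}) = 0 := fn_slab_null n hn v₀ hv₀n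
      have := tendsto_measure_iInter_atTop (μ := μ)
        (fun k => (hAm k).nullMeasurableSet) hAanti
        ⟨0, ne_of_lt (lt_of_le_of_lt (measure_mono Set.inter_subset_left) hSfin)⟩
      rwa [hAinter, h0] at this
    rw [Metric.tendsto_nhds]
    intro ε hε
    have hM1 : (0:ℝ) < M + 1 := by linarith
    obtain ⟨k, hk⟩ := (htendA.eventually
      (gt_mem_nhds (ENNReal.ofReal_pos.mpr (div_pos hε hM1)))).exists
    have hAkfin : μ (A k) ≠ ⊤ :=
      ne_of_lt (lt_of_le_of_lt (measure_mono Set.inter_subset_left) hSfin)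
    have hAkr : (μ (A k)).toReal < ε / (M + 1) :=
      (ENNReal.lt_ofReal_iff_toReal_lt hAkfin).mp hk
    refine Filter.eventually_of_mem
      (Filter.preimage_mem_comap (Filter.Ici_mem_atTop (max 1 ((k+1) * R)))) ?_
    intro z hz
    simp only [Set.mem_preimage, Set.mem_Ici, le_max_iff] at hz
    have hz1 : 1 ≤ ‖z‖ := le_trans (le_max_left _ _) hz
    have hzkR : (k+1) * R ≤ ‖z‖ := le_trans (le_max_right _ _) hz
    have hz0 : (0:ℝ) < ‖z‖ := lt_of_lt_of_le one_pos hz1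
    rw [dist_zero_right]
    have hsub : S ∩ {w | ‖⟪v₀, w⟫_ℂ‖ ≤ R / ‖z‖} ⊆ A k := by
      refine Set.inter_subset_inter_right _ fun w hw => ?_
      simp only [Set.mem_setOf_eq] at hw ⊢
      refine le_trans hw ?_
      rw [div_le_div_iff₀ hz0 (by positivity : (0:ℝ) < (k:ℝ)+1)]
      calc R * ((k:ℝ)+1) = ((k:ℝ)+1) * R := mul_comm _ _
        _ ≤ ‖z‖ := hzkR
        _ = 1 * ‖z‖ := (one_mul _).symm
    calc ‖dualRadonC h z‖
        ≤ M * (μ (S ∩ {w | ‖⟪v₀, w⟫_ℂ‖ ≤ R / ‖z‖})).toReal := key z hz1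
      _ ≤ M * (μ (A k)).toReal := by
          refine mul_le_mul_of_nonneg_left ?_ hM0
          exact ENNReal.toReal_mono hAkfin (measure_mono hsub)
      _ ≤ M * (ε / (M + 1)) := mul_le_mul_of_nonneg_left hAkr.le hM0
      _ < ε := by
          rw [mul_div_assoc', div_lt_iff₀ hM1]
          nlinarith
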